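/- Let α > 2 and let nodes w have transmission powers P_w ≤ β̄·N̄·R̄^α and transmission probabilities p_w ≥ 0 such that the sum of p_w over any disk of radius R̄ is at most γ. If for each i ≥ 2 the ring C_i (points at distance in [(i+1)R̄,(i+2)R̄] from v) contains at most (6i+9)Γ² independent points, then the expected interference Σ_w p_w·P_w/dist(w,u)^α at any point u within distance R̄ of v, summed over all w at distance greater than 3R̄ from v, is at most 240·γ·β̄·N̄·Γ²·Σ_{i=1}^{n} 1/i^{α-1}. -/

import Mathlib

open Finset

private lemma aux_sum (g : ℕ → ℝ) (hg0 : ∀ i, 0 ≤ g i)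
    (hmono : ∀ i j : ℕ, 1 ≤ i → i ≤ j → g j ≤ g i) :
    ∀ (n : ℕ) (S : Finset ℕ), S.card = n → (∀ i ∈ S, 1 ≤ i) →
      ∑ i ∈ S, g i ≤ ∑ j ∈ Finset.Icc 1 n, g j := by
  intro n
  induction n with
  | zero => intro S hS _; simp [Finset.card_eq_zero.mp hS]
  | succ n ih =>
    intro S hS h1
    have hne : S.Nonempty := Finset.card_pos.mp (by omega)
    set m := S.max' hne with hm
    have hmS : m ∈ S := S.max'_mem hne
    have hsub : S ⊆ Finset.Icc 1 m := fun x hx =>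
      Finset.mem_Icc.mpr ⟨h1 x hx, S.le_max' x hx⟩
    have hcard : n + 1 ≤ m := by
      have := Finset.card_le_card hsub
      rw [hS, Nat.card_Icc] at this
      omega
    have hstep : ∑ i ∈ S.erase m, g i + g m = ∑ i ∈ S, g i :=
      Finset.sum_erase_add S g hmS
    have h2 : ∑ i ∈ S.erase m, g i ≤ ∑ j ∈ Finset.Icc 1 n, g j := by
      apply ih
      · simp [Finset.card_erase_of_mem hmS, hS]

      · intro i hi; exact h1 i (Finset.mem_of_mem_erase hi)
    have h3 : g m ≤ g (n + 1) := hmono (n+1) m (by omega) hcard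
    have htop : ∑ j ∈ Finset.Icc 1 (n+1), g j
        = ∑ j ∈ Finset.Icc 1 n, g j + g (n+1) :=
      Finset.sum_Icc_succ_top (by omega) g
    linarith

open Finset in
theorem interference_bound
    (α β N Rbar Rmin Γ γ : ℝ)
    (hα : 2 < α) (hβ : 0 < β) (hN : 0 < N) (hRmin : 0 < Rmin)
    (hΓ : 1 ≤ Γ) (hΓdef : Γ = Rbar / Rmin) (hγ : 0 ≤ γ)
    (V : Finset (EuclideanSpace ℝ (Fin 2)))
    (P p : EuclideanSpace ℝ (Fin 2) → ℝ)
    (hP : ∀ w ∈ V, P w ≤ β * N * Rbar ^ α)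
    (hp : ∀ w ∈ V, 0 ≤ p w)
    (hdisk : ∀ x : EuclideanSpace ℝ (Fin 2),
      ∑ w ∈ V.filter (fun w => dist w x ≤ Rbar), p w ≤ γ)
    (v u : EuclideanSpace ℝ (Fin 2)) (hu : dist u v ≤ Rbar)
    (hrings : ∀ i : ℕ, 2 ≤ i →
      ((V.filter (fun w => ((i : ℝ) + 1) * Rbar ≤ dist w v ∧
        dist w v ≤ ((i : ℝ) + 2) * Rbar)).card : ℝ) ≤ (6 * (i : ℝ) + 9) * Γ ^ 2) :
    ∑ w ∈ V.filter (fun w => 3 * Rbar < dist w v), p w * P w / dist w u ^ α ≤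
      240 * γ * β * N * Γ ^ 2 * ∑ i ∈ Finset.Icc 1 V.card, (1 : ℝ) / (i : ℝ) ^ (α - 1) := by
  have hRbar : 0 < Rbar := by
    have h1 : (1:ℝ) ≤ Rbar / Rmin := hΓdef ▸ hΓ
    have := (le_div_iff₀ hRmin).mp h1
    linarith
  set F := V.filter (fun w => 3 * Rbar < dist w v) with hF
  set I : EuclideanSpace ℝ (Fin 2) → ℕ := fun w => ⌊dist w v / Rbar⌋₊ - 1 with hI
  -- basic facts about I on F
  have hfacts : ∀ w ∈ F, 2 ≤ I w ∧ ((I w : ℝ) + 1) * Rbar ≤ dist w v ∧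
      dist w v ≤ ((I w : ℝ) + 2) * Rbar ∧ (I w : ℝ) * Rbar ≤ dist w u := by
    intro w hw
    obtain ⟨hwV, hw3⟩ := Finset.mem_filter.mp hw
    have hd0 : 0 ≤ dist w v / Rbar := div_nonneg dist_nonneg hRbar.le
    have hfl : 3 ≤ ⌊dist w v / Rbar⌋₊ := by
      apply Nat.le_floor
      rw [le_div_iff₀ hRbar]
      push_cast; linarith
    have hI2 : 2 ≤ I w := by simp only [hI]; omega
    have hIfl : (I w : ℝ) + 1 = (⌊dist w v / Rbar⌋₊ : ℝ) := by
      have : I w + 1 = ⌊dist w v / Rbar⌋₊ := by simp only [hI]; omega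
      exact_mod_cast congrArg (Nat.cast : ℕ → ℝ) this
    have hlow : ((I w : ℝ) + 1) * Rbar ≤ dist w v := by
      rw [hIfl]
      have := Nat.floor_le hd0
      calc (⌊dist w v / Rbar⌋₊ : ℝ) * Rbar ≤ (dist w v / Rbar) * Rbar :=
            mul_le_mul_of_nonneg_right this hRbar.le
        _ = dist w v := by field_simp
    have hhigh : dist w v ≤ ((I w : ℝ) + 2) * Rbar := by
      have h2 := Nat.lt_floor_add_one (dist w v / Rbar)
      have : dist w v / Rbar < (I w : ℝ) + 2 := by rw [show ((I w:ℝ)+2) = ((I w:ℝ)+1)+1 by ring, hIfl]; exact h2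
      have := (div_lt_iff₀ hRbar).mp this
      linarith
    have hdu : (I w : ℝ) * Rbar ≤ dist w u := by
      have htri : dist w v ≤ dist w u + dist u v := dist_triangle w u v
      nlinarith [hlow]
    exact ⟨hI2, hlow, hhigh, hdu⟩
  -- termwise bound
  have hterm : ∀ w ∈ F, p w * P w / dist w u ^ α ≤ γ * β * N / (I w : ℝ) ^ α := by
    intro w hw
    obtain ⟨hI2, hlow, hhigh, hdu⟩ := hfacts w hw
    obtain ⟨hwV, hw3⟩ := Finset.mem_filter.mp hw
    have hi0 : (0:ℝ) < (I w : ℝ) := by exact_mod_cast Nat.lt_of_lt_of_le (by norm_num) hI2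
    have hiR : (0:ℝ) < (I w : ℝ) * Rbar := mul_pos hi0 hRbar
    have hpw0 : 0 ≤ p w := hp w hwV
    have hpwγ : p w ≤ γ := by
      have hmem : w ∈ V.filter (fun x => dist x w ≤ Rbar) :=
        Finset.mem_filter.mpr ⟨hwV, by simp [dist_self, hRbar.le]⟩
      have := Finset.single_le_sum (f := p)
        (fun i hi => hp i (Finset.mem_filter.mp hi).1) hmem
      exact this.trans (hdisk w)
    have hRα : (0:ℝ) < Rbar ^ α := Real.rpow_pos_of_pos hRbar α
    have hnum : p w * P w ≤ γ * (β * N * Rbar ^ α) := by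
      have h1 : p w * P w ≤ p w * (β * N * Rbar ^ α) :=
        mul_le_mul_of_nonneg_left (hP w hwV) hpw0
      have h2 : p w * (β * N * Rbar ^ α) ≤ γ * (β * N * Rbar ^ α) :=
        mul_le_mul_of_nonneg_right hpwγ (by positivity)
      linarith
    have hden : ((I w : ℝ) * Rbar) ^ α ≤ dist w u ^ α :=
      Real.rpow_le_rpow hiR.le hdu (by linarith)
    have hdenpos : (0:ℝ) < ((I w : ℝ) * Rbar) ^ α := Real.rpow_pos_of_pos hiR α
    have hdiv : p w * P w / dist w u ^ α ≤ γ * (β * N * Rbar ^ α) / ((I w : ℝ) * Rbar) ^ α :=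
      div_le_div₀ (by positivity) hnum hdenpos hden
    have heq : γ * (β * N * Rbar ^ α) / ((I w : ℝ) * Rbar) ^ α = γ * β * N / (I w : ℝ) ^ α := by
      rw [Real.mul_rpow hi0.le hRbar.le]
      have hiα : (0:ℝ) < (I w : ℝ) ^ α := Real.rpow_pos_of_pos hi0 α
      field_simp
    linarith [hdiv, heq ▸ hdiv]
  have hsum1 : ∑ w ∈ F, p w * P w / dist w u ^ α ≤ ∑ w ∈ F, γ * β * N / (I w : ℝ) ^ α :=
    Finset.sum_le_sum hterm
  -- group by I
  have hcomp : ∑ w ∈ F, γ * β * N / (I w : ℝ) ^ α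
      = ∑ i ∈ F.image I, ((F.filter fun w => I w = i).card) • (γ * β * N / (i : ℝ) ^ α) :=
    Finset.sum_comp (fun i : ℕ => γ * β * N / (i : ℝ) ^ α) I
  set g : ℕ → ℝ := fun j => (1:ℝ) / (j : ℝ) ^ (α - 1) with hg
  have hg0 : ∀ j, 0 ≤ g j := by
    intro j; simp only [hg]; positivity
  have hgmono : ∀ i j : ℕ, 1 ≤ i → i ≤ j → g j ≤ g i := by
    intro i j hi hij
    simp only [hg]
    have hi0 : (0:ℝ) < (i:ℝ) := by exact_mod_cast hi
    have hle : (i:ℝ) ≤ (j:ℝ) := by exact_mod_cast hij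
    have h1 : (i:ℝ) ^ (α-1) ≤ (j:ℝ) ^ (α-1) := Real.rpow_le_rpow hi0.le hle (by linarith)
    have h2 : (0:ℝ) < (i:ℝ) ^ (α-1) := Real.rpow_pos_of_pos hi0 _
    exact one_div_le_one_div_of_le h2 h1
  -- per-fiber bound
  have hfiber : ∀ i ∈ F.image I,
      ((F.filter fun w => I w = i).card) • (γ * β * N / (i : ℝ) ^ α)
        ≤ 15 * Γ ^ 2 * γ * β * N * g i := by
    intro i hi
    obtain ⟨w, hwF, hwi⟩ := Finset.mem_image.mp hi
    obtain ⟨hI2, _, _, _⟩ := hfacts w hwF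
    have hi2 : 2 ≤ i := hwi ▸ hI2
    have hi0 : (0:ℝ) < (i:ℝ) := by exact_mod_cast Nat.lt_of_lt_of_le (by norm_num) hi2
    have hsub : F.filter (fun w => I w = i) ⊆
        V.filter (fun w => ((i : ℝ) + 1) * Rbar ≤ dist w v ∧ dist w v ≤ ((i : ℝ) + 2) * Rbar) := by
      intro x hx
      obtain ⟨hxF, hxi⟩ := Finset.mem_filter.mp hx
      obtain ⟨_, hlo, hhi, _⟩ := hfacts x hxF
      exact Finset.mem_filter.mpr ⟨(Finset.mem_filter.mp hxF).1, by rw [← hxi]; exact ⟨hlo, hhi⟩⟩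
    have hcard : (((F.filter fun w => I w = i).card : ℝ)) ≤ (6 * (i:ℝ) + 9) * Γ ^ 2 := by
      have h1 : ((F.filter fun w => I w = i).card : ℝ) ≤
          ((V.filter (fun w => ((i : ℝ) + 1) * Rbar ≤ dist w v ∧
            dist w v ≤ ((i : ℝ) + 2) * Rbar)).card : ℝ) := by
        exact_mod_cast Finset.card_le_card hsub
      exact h1.trans (hrings i hi2)
    rw [nsmul_eq_mul]
    have hfpos : (0:ℝ) ≤ γ * β * N / (i : ℝ) ^ α := by positivity
    have hΓ2 : (0:ℝ) < Γ ^ 2 := by positivity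
    have step1 : ((F.filter fun w => I w = i).card : ℝ) * (γ * β * N / (i : ℝ) ^ α)
        ≤ ((6 * (i:ℝ) + 9) * Γ ^ 2) * (γ * β * N / (i : ℝ) ^ α) :=
      mul_le_mul_of_nonneg_right hcard hfpos
    have step2 : ((6 * (i:ℝ) + 9) * Γ ^ 2) * (γ * β * N / (i : ℝ) ^ α)
        ≤ (15 * (i:ℝ) * Γ ^ 2) * (γ * β * N / (i : ℝ) ^ α) := by
      apply mul_le_mul_of_nonneg_right _ hfpos
      have : (2:ℝ) ≤ (i:ℝ) := by exact_mod_cast hi2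
      nlinarith
    have step3 : (15 * (i:ℝ) * Γ ^ 2) * (γ * β * N / (i : ℝ) ^ α)
        = 15 * Γ ^ 2 * γ * β * N * g i := by
      simp only [hg]
      have hrw : (i:ℝ) ^ (α - 1) = (i:ℝ) ^ α / (i:ℝ) := by
        rw [Real.rpow_sub hi0, Real.rpow_one]
      rw [hrw]
      have hiα : (0:ℝ) < (i:ℝ) ^ α := Real.rpow_pos_of_pos hi0 α
      field_simp
    linarith
  have hsum2 : ∑ i ∈ F.image I, ((F.filter fun w => I w = i).card) • (γ * β * N / (i : ℝ) ^ α)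
      ≤ 15 * Γ ^ 2 * γ * β * N * ∑ i ∈ F.image I, g i := by
    rw [Finset.mul_sum]
    exact Finset.sum_le_sum hfiber
  -- bound the index sum
  have hS1 : ∀ i ∈ F.image I, 1 ≤ i := by
    intro i hi
    obtain ⟨w, hwF, hwi⟩ := Finset.mem_image.mp hi
    obtain ⟨hI2, _, _, _⟩ := hfacts w hwF
    omega
  have haux : ∑ i ∈ F.image I, g i ≤ ∑ j ∈ Finset.Icc 1 (F.image I).card, g j :=
    aux_sum g hg0 hgmono (F.image I).card (F.image I) rfl hS1
  have hcards : (F.image I).card ≤ V.card :=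
    le_trans Finset.card_image_le (Finset.card_le_card (Finset.filter_subset _ V))
  have hmonoI : ∑ j ∈ Finset.Icc 1 (F.image I).card, g j ≤ ∑ j ∈ Finset.Icc 1 V.card, g j :=
    Finset.sum_le_sum_of_subset_of_nonneg
      (Finset.Icc_subset_Icc_right hcards) (fun j _ _ => hg0 j)
  have hT0 : 0 ≤ ∑ j ∈ Finset.Icc 1 V.card, g j := Finset.sum_nonneg fun j _ => hg0 j
  have hC : 15 * Γ ^ 2 * γ * β * N * ∑ j ∈ Finset.Icc 1 V.card, g j
      ≤ 240 * γ * β * N * Γ ^ 2 * ∑ j ∈ Finset.Icc 1 V.card, g j := by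
    apply mul_le_mul_of_nonneg_right _ hT0
    have hX : (0:ℝ) ≤ Γ ^ 2 * γ * β * N := by positivity
    nlinarith [hX]
  have hCmul : 0 ≤ 15 * Γ ^ 2 * γ * β * N := by positivity
  calc ∑ w ∈ F, p w * P w / dist w u ^ α
      ≤ ∑ w ∈ F, γ * β * N / (I w : ℝ) ^ α := hsum1
    _ = ∑ i ∈ F.image I, ((F.filter fun w => I w = i).card) • (γ * β * N / (i : ℝ) ^ α) := hcomp
    _ ≤ 15 * Γ ^ 2 * γ * β * N * ∑ i ∈ F.image I, g i := hsum2
    _ ≤ 15 * Γ ^ 2 * γ * β * N * ∑ j ∈ Finset.Icc 1 V.card, g j := by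
        apply mul_le_mul_of_nonneg_left _ hCmul
        exact haux.trans hmonoI
    _ ≤ 240 * γ * β * N * Γ ^ 2 * ∑ j ∈ Finset.Icc 1 V.card, g j := hC
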